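/- Define f : ℕ → ℕ by letting f(n) be the minimum of the chromatic number χ(G × H) over all finite digraphs G and H with χ(G) = χ(H) = n. Then either f(n) ≤ 3 for all n, or f(n) → ∞ as n → ∞. -/

import Mathlib

/-- The symmetrization of a digraph: the simple graph in which `u ~ v` iff there is an
arc between them in some direction. -/
def symmG {α : Type} (D : α → α → Prop) : SimpleGraph α where
  Adj u v := u ≠ v ∧ (D u v ∨ D v u)
  symm := ⟨fun u v h => ⟨h.1.symm, h.2.symm⟩⟩
  loopless := ⟨fun u h => h.1 rfl⟩

/-- The chromatic number of a digraph: the least `k` such that its symmetrization is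
properly `k`-colourable. -/
noncomputable def chrNum {α : Type} (D : α → α → Prop) : ℕ :=
  sInf {k : ℕ | (symmG D).Colorable k}

/-- The categorial product of two digraphs. -/
def tensorRel {α β : Type} (G : α → α → Prop) (H : β → β → Prop)
    (p q : α × β) : Prop :=
  G p.1 q.1 ∧ H p.2 q.2

/-- The Poljak–Rödl function: `pr n` is the minimum of `χ(G × H)` over all finite
digraphs `G` and `H` of chromatic number `n`. -/
noncomputable def pr (n : ℕ) : ℕ :=
  sInf {c : ℕ | ∃ (α β : Type) (_ : Fintype α) (_ : Fintype β)
    (G : α → α → Prop) (H : β → β → Prop),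
    chrNum G = n ∧ chrNum H = n ∧ chrNum (tensorRel G H) = c}

namespace PRaux

structure Dig where
  V : Type
  R : V → V → Prop

def Loopless {α : Type} (D : α → α → Prop) : Prop := ∀ a, ¬ D a a

def DHom {α β : Type} (D : α → α → Prop) (E : β → β → Prop) (f : α → β) : Prop :=
  ∀ u v, D u v → E (f u) (f v)

def step (X : Dig) : Dig :=
  ⟨{p : X.V × X.V // X.R p.1 p.2}, fun e f => e.1.2 = f.1.1⟩

def It (X : Dig) : ℕ → Dig
  | 0 => X
  | (t+1) => step (It X t)

lemma step_finite (X : Dig) (h : Finite X.V) : Finite (step X).V := by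
  haveI := h; exact Subtype.finite

lemma It_finite (X : Dig) (h : Finite X.V) : ∀ t, Finite (It X t).V
  | 0 => h
  | (t+1) => step_finite _ (It_finite X h t)

lemma step_loopless (X : Dig) (h : Loopless X.R) : Loopless (step X).R := by
  rintro e (he : e.1.2 = e.1.1)
  exact h e.1.1 (he ▸ e.2)

lemma It_loopless (X : Dig) (h : Loopless X.R) : ∀ t, Loopless (It X t).R
  | 0 => h
  | (t+1) => step_loopless _ (It_loopless X h t)

lemma It_succ (X : Dig) : ∀ t, It X (t+1) = It (step X) t
  | 0 => rfl
  | (t+1) => congrArg step (It_succ X t)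

lemma chrNum_congr {A B : Dig} (h : A = B) : chrNum A.R = chrNum B.R := by
  subst h; rfl

lemma colorable_chrNum {α : Type} [Finite α] (D : α → α → Prop) :
    (symmG D).Colorable (chrNum D) := by
  haveI : Fintype α := Fintype.ofFinite α
  exact Nat.sInf_mem (s := {k : ℕ | (symmG D).Colorable k}) ⟨_, (symmG D).colorable_of_fintype⟩

lemma chrNum_le_of_colorable {α : Type} {D : α → α → Prop} {k : ℕ}
    (h : (symmG D).Colorable k) : chrNum D ≤ k := Nat.sInf_le h

lemma colorable_of_chrNum_le {α : Type} [Finite α] {D : α → α → Prop} {k : ℕ}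
    (h : chrNum D ≤ k) : (symmG D).Colorable k :=
  (colorable_chrNum D).mono h

lemma chrNum_le_of_hom_inj {α β : Type} [Finite β] {D : α → α → Prop} {E : β → β → Prop}
    (f : α → β) (hinj : Function.Injective f) (hf : DHom D E f) : chrNum D ≤ chrNum E := by
  obtain ⟨c⟩ := colorable_chrNum E
  refine chrNum_le_of_colorable ⟨SimpleGraph.Coloring.mk (fun v => c (f v)) ?_⟩
  rintro u v ⟨hne, h⟩
  exact c.valid ⟨fun he => hne (hinj he), h.imp (hf _ _) (hf _ _)⟩

lemma chrNum_le_of_hom_loopless {α β : Type} [Finite β] {D : α → α → Prop} {E : β → β → Prop}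
    (f : α → β) (hE : Loopless E) (hf : DHom D E f) : chrNum D ≤ chrNum E := by
  obtain ⟨c⟩ := colorable_chrNum E
  refine chrNum_le_of_colorable ⟨SimpleGraph.Coloring.mk (fun v => c (f v)) ?_⟩
  rintro u v ⟨hne, h⟩
  have hEf : E (f u) (f v) ∨ E (f v) (f u) := h.imp (hf _ _) (hf _ _)
  have hfne : f u ≠ f v := by
    rintro he; rcases hEf with h' | h' <;> rw [he] at h' <;> exact hE _ h'
  exact c.valid ⟨hfne, hEf⟩

open Classical in
lemma factA (X : Dig) [hF : Finite X.V] : chrNum X.R ≤ 2 ^ chrNum (step X).R := by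
  haveI : Finite (step X).V := step_finite X hF
  obtain ⟨c⟩ := colorable_chrNum (step X).R
  set m := chrNum (step X).R with hm
  let φ : X.V → Finset (Fin m) :=
    fun v => Finset.univ.filter (fun i => ∃ e : (step X).V, e.1.1 = v ∧ c e = i)
  have key : ∀ u v : X.V, u ≠ v → X.R u v → φ u ≠ φ v := by
    intro u v hne h
    let e : (step X).V := ⟨(u, v), h⟩
    have h1 : c e ∈ φ u := by
      simp only [φ, Finset.mem_filter, Finset.mem_univ, true_and]
      exact ⟨e, rfl, rfl⟩
    have h2 : c e ∉ φ v := by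
      simp only [φ, Finset.mem_filter, Finset.mem_univ, true_and]
      rintro ⟨e', he1, he2⟩
      have hnee : e ≠ e' := by
        intro hEq
        apply hne
        have : e.1.1 = e'.1.1 := by rw [hEq]
        rw [he1] at this
        exact this
      have hadj : (symmG (step X).R).Adj e e' := by
        refine ⟨hnee, Or.inl ?_⟩
        show e.1.2 = e'.1.1
        rw [he1]
      exact c.valid hadj he2.symm
    intro hEq
    exact h2 (hEq ▸ h1)
  have hcol : (symmG X.R).Colorable (Fintype.card (Finset (Fin m))) := by
    refine (SimpleGraph.Coloring.mk φ ?_).colorable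
    rintro u v ⟨hne, h | h⟩
    · exact key u v hne h
    · exact (key v u hne.symm h).symm
  have : (symmG X.R).Colorable (2 ^ m) := by
    have hcard : Fintype.card (Finset (Fin m)) = 2 ^ m := by simp
    rwa [hcard] at hcol
  exact chrNum_le_of_colorable this

lemma factB {kk c : ℕ} (X : Dig) [hFin : Finite X.V] (hX : Loopless X.R)
    (F : Fin c → Finset (Fin kk)) (hF : ∀ i j : Fin c, i ≠ j → (F i \ F j).Nonempty)
    (hc : chrNum X.R ≤ c) : chrNum (step X).R ≤ kk := by
  obtain ⟨col⟩ := colorable_of_chrNum_le hc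
  have hne : ∀ e : (step X).V, col e.1.1 ≠ col e.1.2 := fun e =>
    col.valid ⟨fun h => hX e.1.1 (h ▸ e.2), Or.inl e.2⟩
  let g : (step X).V → Fin kk := fun e => (hF _ _ (hne e)).choose
  have hg1 : ∀ e : (step X).V, g e ∈ F (col e.1.1) :=
    fun e => (Finset.mem_sdiff.1 (hF _ _ (hne e)).choose_spec).1
  have hg2 : ∀ e : (step X).V, g e ∉ F (col e.1.2) :=
    fun e => (Finset.mem_sdiff.1 (hF _ _ (hne e)).choose_spec).2
  have aux : ∀ e e' : (step X).V, (step X).R e e' → g e ≠ g e' := by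
    intro e e' h hEq
    apply hg2 e
    have : col e.1.2 = col e'.1.1 := by rw [show e.1.2 = e'.1.1 from h]
    rw [this, hEq]
    exact hg1 e'
  refine chrNum_le_of_colorable ⟨SimpleGraph.Coloring.mk g ?_⟩
  rintro e e' ⟨hnee, h | h⟩
  · exact aux e e' h
  · exact (aux e' e h).symm

lemma antichain (c : ℕ) (hc : 4 ≤ c) :
    ∃ F : Fin (c+1) → Finset (Fin c), ∀ i j, i ≠ j → (F i \ F j).Nonempty := by
  have h0 : (0:ℕ) < c := by omega
  have h1 : (1:ℕ) < c := by omega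
  have h2 : (2:ℕ) < c := by omega
  have h3 : (3:ℕ) < c := by omega
  set F : Fin (c+1) → Finset (Fin c) := fun i =>
    if h : (i : ℕ) + 1 < c then {⟨0, h0⟩, ⟨(i : ℕ) + 1, h⟩}
    else if (i : ℕ) = c - 1 then {⟨1, h1⟩, ⟨2, h2⟩} else {⟨1, h1⟩, ⟨3, h3⟩} with hFdef
  have hF1 : ∀ (x : Fin (c+1)) (h : (x : ℕ) + 1 < c),
      F x = {⟨0, h0⟩, ⟨(x : ℕ) + 1, h⟩} := fun x h => dif_pos h
  have hF2 : ∀ (x : Fin (c+1)), ¬((x : ℕ) + 1 < c) → (x : ℕ) = c - 1 →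
      F x = {⟨1, h1⟩, ⟨2, h2⟩} := fun x h h' => by
    show dite _ _ _ = _
    rw [dif_neg h, if_pos h']
  have hF3 : ∀ (x : Fin (c+1)), ¬((x : ℕ) + 1 < c) → ¬((x : ℕ) = c - 1) →
      F x = {⟨1, h1⟩, ⟨3, h3⟩} := fun x h h' => by
    show dite _ _ _ = _
    rw [dif_neg h, if_neg h']
  refine ⟨F, ?_⟩
  intro i j hij
  have hijn : (i : ℕ) ≠ (j : ℕ) := fun h => hij (Fin.ext h)
  have hi' : (i : ℕ) ≤ c := Nat.lt_succ_iff.1 i.isLt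
  have hj' : (j : ℕ) ≤ c := Nat.lt_succ_iff.1 j.isLt
  by_cases hi : (i : ℕ) + 1 < c <;> by_cases hj : (j : ℕ) + 1 < c
  · refine ⟨⟨(i : ℕ) + 1, hi⟩, ?_⟩
    rw [hF1 i hi, hF1 j hj]
    simp only [Finset.mem_sdiff, Finset.mem_insert, Finset.mem_singleton, Fin.mk.injEq, or_true, true_or, not_or, and_true, true_and]
    omega
  · refine ⟨⟨0, h0⟩, ?_⟩
    by_cases hj2 : (j : ℕ) = c - 1
    · rw [hF1 i hi, hF2 j hj hj2]
      simp only [Finset.mem_sdiff, Finset.mem_insert, Finset.mem_singleton, Fin.mk.injEq, or_true, true_or, not_or, and_true, true_and]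
      omega
    · rw [hF1 i hi, hF3 j hj hj2]
      simp only [Finset.mem_sdiff, Finset.mem_insert, Finset.mem_singleton, Fin.mk.injEq, or_true, true_or, not_or, and_true, true_and]
      omega
  · by_cases hi2 : (i : ℕ) = c - 1
    · refine ⟨if (j : ℕ) = 0 then ⟨2, h2⟩ else ⟨1, h1⟩, ?_⟩
      by_cases hj0 : (j : ℕ) = 0
      · rw [if_pos hj0, hF2 i hi hi2, hF1 j hj]
        simp only [Finset.mem_sdiff, Finset.mem_insert, Finset.mem_singleton, Fin.mk.injEq, or_true, true_or, not_or, and_true, true_and]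
        omega
      · rw [if_neg hj0, hF2 i hi hi2, hF1 j hj]
        simp only [Finset.mem_sdiff, Finset.mem_insert, Finset.mem_singleton, Fin.mk.injEq, or_true, true_or, not_or, and_true, true_and]
        omega
    · refine ⟨if (j : ℕ) = 0 then ⟨3, h3⟩ else ⟨1, h1⟩, ?_⟩
      by_cases hj0 : (j : ℕ) = 0
      · rw [if_pos hj0, hF3 i hi hi2, hF1 j hj]
        simp only [Finset.mem_sdiff, Finset.mem_insert, Finset.mem_singleton, Fin.mk.injEq, or_true, true_or, not_or, and_true, true_and]
        omega
      · rw [if_neg hj0, hF3 i hi hi2, hF1 j hj]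
        simp only [Finset.mem_sdiff, Finset.mem_insert, Finset.mem_singleton, Fin.mk.injEq, or_true, true_or, not_or, and_true, true_and]
        omega
  · by_cases hi2 : (i : ℕ) = c - 1 <;> by_cases hj2 : (j : ℕ) = c - 1
    · exact absurd (Fin.ext (by omega)) hij
    · refine ⟨⟨2, h2⟩, ?_⟩
      rw [hF2 i hi hi2, hF3 j hj hj2]
      simp only [Finset.mem_sdiff, Finset.mem_insert, Finset.mem_singleton, Fin.mk.injEq, or_true, true_or, not_or, and_true, true_and]
      omega
    · refine ⟨⟨3, h3⟩, ?_⟩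
      rw [hF3 i hi hi2, hF2 j hj hj2]
      simp only [Finset.mem_sdiff, Finset.mem_insert, Finset.mem_singleton, Fin.mk.injEq, or_true, true_or, not_or, and_true, true_and]
      omega
    · exact absurd (Fin.ext (by omega)) hij

def K4 : Dig := ⟨Fin 4, fun i j => i ≠ j⟩

def tbl : Fin 4 → Fin 4 → Fin 4 → Fin 3 :=
  ![![![0, 0, 0, 0], ![0, 0, 0, 0], ![0, 1, 0, 0], ![0, 1, 1, 0]],
    ![![0, 1, 2, 2], ![0, 0, 0, 0], ![1, 1, 0, 2], ![1, 1, 1, 0]],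
    ![![0, 2, 2, 2], ![0, 0, 0, 0], ![0, 0, 0, 0], ![1, 1, 1, 0]],
    ![![0, 2, 2, 2], ![0, 0, 0, 0], ![0, 2, 0, 0], ![0, 0, 0, 0]]]

lemma tbl_key : ∀ a b c d : Fin 4, a ≠ b → b ≠ c → c ≠ d → tbl a b c ≠ tbl b c d := by decide

/-- explicit coloring of the second iterated arc digraph of `K4` -/
lemma cert : chrNum (It K4 2).R ≤ 3 := by
  have hcol : (symmG (It K4 2).R).Colorable (Fintype.card (Fin 3)) := by
    refine (SimpleGraph.Coloring.mk
      (fun e => tbl e.1.1.1.1 e.1.1.1.2 e.1.2.1.2) ?_).colorable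
    have aux : ∀ e e' : (It K4 2).V, (It K4 2).R e e' →
        tbl e.1.1.1.1 e.1.1.1.2 e.1.2.1.2 ≠ tbl e'.1.1.1.1 e'.1.1.1.2 e'.1.2.1.2 := by
      rintro ⟨⟨⟨⟨a, b⟩, hab⟩, ⟨⟨b2, c⟩, hbc⟩⟩, h2⟩ ⟨⟨⟨⟨b3, c3⟩, h3⟩, ⟨⟨c4, d⟩, hcd⟩⟩, h4⟩ hrel
      have h2' : b = b2 := h2
      have h4' : c3 = c4 := h4
      have hrel' : (⟨(b2, c), hbc⟩ : (step K4).V) = ⟨(b3, c3), h3⟩ := hrel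
      replace hrel' : b2 = b3 ∧ c = c3 :=
        ⟨congrArg (fun x : (step K4).V => x.1.1) hrel', congrArg (fun x : (step K4).V => x.1.2) hrel'⟩
      obtain ⟨hb, hcc⟩ := hrel'
      subst h2' h4' hb hcc
      simp only
      exact tbl_key _ _ _ _ hab h3 hcd
    rintro e e' ⟨hne, h | h⟩
    · exact aux e e' h
    · exact (aux e' e h).symm
  exact chrNum_le_of_colorable (by simpa using hcol)

lemma It_hom (X Y : Dig) (f : X.V → Y.V) (hf : DHom X.R Y.R f) :
    ∀ t, ∃ g : (It X t).V → (It Y t).V, DHom (It X t).R (It Y t).R g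
  | 0 => ⟨f, hf⟩
  | (t+1) => by
      obtain ⟨g, hg⟩ := It_hom X Y f hf t
      refine ⟨fun e => ⟨(g e.1.1, g e.1.2), hg _ _ e.2⟩, ?_⟩
      intro e e' h
      show g e.1.2 = g e'.1.1
      rw [show e.1.2 = e'.1.1 from h]

lemma hom_to_K4 (X : Dig) [Finite X.V] (hX : Loopless X.R) (h4 : chrNum X.R ≤ 4) :
    ∃ f : X.V → K4.V, DHom X.R K4.R f := by
  obtain ⟨c⟩ := colorable_of_chrNum_le h4
  refine ⟨c, fun u v h => ?_⟩
  exact c.valid ⟨fun he => hX u (he ▸ h), Or.inl h⟩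

lemma K4_loopless : Loopless K4.R := fun a h => h rfl

lemma descent : ∀ c, 4 ≤ c → ∃ t, ∀ X : Dig, Finite X.V → Loopless X.R →
    chrNum X.R ≤ c → chrNum (It X t).R ≤ 3 := by
  intro c hc
  induction c, hc using Nat.le_induction with
  | base =>
    refine ⟨2, fun X hFin hl h4 => ?_⟩
    haveI := hFin
    obtain ⟨f, hf⟩ := hom_to_K4 X hl h4
    obtain ⟨g, hg⟩ := It_hom X K4 f hf 2
    haveI : Finite (It K4 2).V := It_finite K4 (by exact inferInstanceAs (Finite (Fin 4))) 2
    exact le_trans (chrNum_le_of_hom_loopless g (It_loopless K4 K4_loopless 2) hg) cert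
  | succ c hc ih =>
    obtain ⟨t, ih⟩ := ih
    refine ⟨t + 1, fun X hFin hl h => ?_⟩
    haveI := hFin
    obtain ⟨F, hF⟩ := antichain c hc
    have hstep : chrNum (step X).R ≤ c := factB X hl F hF h
    have h3 : chrNum (It (step X) t).R ≤ 3 :=
      ih (step X) (step_finite X hFin) (step_loopless X hl) hstep
    rw [chrNum_congr (It_succ X t)]
    exact h3

def tower : ℕ → ℕ → ℕ
  | 0, K => K
  | (t+1), K => 2 ^ tower t K

lemma tower_mono (t : ℕ) : Monotone (tower t) := by
  induction t with
  | zero => exact fun a b h => h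
  | succ t ih => exact fun a b h => Nat.pow_le_pow_right (by norm_num) (ih h)

lemma chrNum_le_tower (X : Dig) (hFin : Finite X.V) :
    ∀ (t K : ℕ), chrNum (It X t).R ≤ K → chrNum X.R ≤ tower t K
  | 0, K, h => h
  | (t+1), K, h => by
      haveI := hFin
      rw [chrNum_congr (It_succ X t)] at h
      have h1 : chrNum (step X).R ≤ tower t K :=
        chrNum_le_tower (step X) (step_finite X hFin) t K h
      calc chrNum X.R ≤ 2 ^ chrNum (step X).R := factA X
        _ ≤ 2 ^ tower t K := Nat.pow_le_pow_right (by norm_num) h1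

def res {α : Type} (D : α → α → Prop) (s : Finset α) :
    {a // a ∈ s} → {a // a ∈ s} → Prop := fun x y => D x.1 y.1

open Classical in
lemma res_le {α : Type} [Finite α] (D : α → α → Prop) (s : Finset α) :
    chrNum (res D s) ≤ chrNum D :=
  chrNum_le_of_hom_inj (fun x => x.1) Subtype.val_injective (fun _ _ h => h)

open Classical in
lemma res_univ {α : Type} [Fintype α] (D : α → α → Prop) :
    chrNum (res D Finset.univ) = chrNum D := by
  refine le_antisymm (res_le D _) ?_
  haveI : Finite {a // a ∈ (Finset.univ : Finset α)} := Subtype.finite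
  refine chrNum_le_of_hom_inj (fun a => (⟨a, Finset.mem_univ a⟩ : {a // a ∈ (Finset.univ : Finset α)}))
    (fun a b h => Subtype.ext_iff.1 h) (fun _ _ h => h)

open Classical in
lemma res_extend {α : Type} [Finite α] (D : α → α → Prop) (s : Finset α) (v : α) :
    chrNum (res D s) ≤ chrNum (res D (s.erase v)) + 1 := by
  haveI : Finite {a // a ∈ s.erase v} := Subtype.finite
  obtain ⟨c⟩ := colorable_chrNum (res D (s.erase v))
  set m := chrNum (res D (s.erase v))
  refine chrNum_le_of_colorable ⟨SimpleGraph.Coloring.mk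
    (fun x => if hx : x.1 = v then Fin.last m
      else (c ⟨x.1, Finset.mem_erase.2 ⟨hx, x.2⟩⟩).castSucc) ?_⟩
  rintro x y ⟨hne, hor⟩
  have hxy : x.1 ≠ y.1 := fun h => hne (Subtype.ext h)
  by_cases hx : x.1 = v <;> by_cases hy : y.1 = v
  · exact absurd (hx.trans hy.symm) hxy
  · simp only [dif_pos hx, dif_neg hy]
    exact (Fin.castSucc_lt_last _).ne'
  · simp only [dif_neg hx, dif_pos hy]
    exact (Fin.castSucc_lt_last _).ne
  · simp only [dif_neg hx, dif_neg hy]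
    intro hEq
    have := c.valid (v := ⟨x.1, Finset.mem_erase.2 ⟨hx, x.2⟩⟩)
      (w := ⟨y.1, Finset.mem_erase.2 ⟨hy, y.2⟩⟩) ⟨fun h => hxy (congrArg (fun z : {a // a ∈ s.erase v} => z.1) h), hor⟩
    exact this (Fin.castSucc_injective _ hEq)

open Classical in
lemma chrNum_res_empty {α : Type} (D : α → α → Prop) (s : Finset α) (hs : s = ∅) :
    chrNum (res D s) = 0 := by
  subst hs
  refine Nat.le_zero.1 (chrNum_le_of_colorable ⟨SimpleGraph.Coloring.mk
    (fun x => absurd x.2 (Finset.notMem_empty _)) ?_⟩)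
  rintro x
  exact absurd x.2 (Finset.notMem_empty _)

open Classical in
lemma ivt {α : Type} [Finite α] (D : α → α → Prop) :
    ∀ (s : Finset α) (k : ℕ), k ≤ chrNum (res D s) → ∃ t : Finset α, chrNum (res D t) = k := by
  intro s
  induction s using Finset.strongInduction with
  | _ s ih =>
    intro k hk
    rcases eq_or_lt_of_le hk with heq | hlt
    · exact ⟨s, heq.symm⟩
    · have hs : s.Nonempty := by
        rcases s.eq_empty_or_nonempty with he | h
        · rw [chrNum_res_empty D s he] at hlt; omega
        · exact h
      obtain ⟨v, hv⟩ := hs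
      have h1 : chrNum (res D s) ≤ chrNum (res D (s.erase v)) + 1 := res_extend D s v
      exact ih (s.erase v) (Finset.erase_ssubset hv) k (by omega)

lemma chrNum_ne (n : ℕ) : chrNum (fun i j : Fin n => i ≠ j) = n := by
  apply le_antisymm
  · exact chrNum_le_of_colorable ⟨SimpleGraph.Coloring.mk id (fun {u v} h => h.1)⟩
  · obtain ⟨c⟩ := colorable_chrNum (fun i j : Fin n => i ≠ j)
    have hinj : Function.Injective c := by
      intro u v h
      by_contra hne
      exact c.valid ⟨hne, Or.inl hne⟩ h
    calc n = Fintype.card (Fin n) := by simp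
      _ ≤ Fintype.card (Fin (chrNum (fun i j : Fin n => i ≠ j))) :=
          Fintype.card_le_of_injective c hinj
      _ = _ := by simp

lemma pr_le {α β : Type} [iα : Fintype α] [iβ : Fintype β] (G : α → α → Prop)
    (H : β → β → Prop) {n : ℕ} (hG : chrNum G = n) (hH : chrNum H = n) :
    pr n ≤ chrNum (tensorRel G H) :=
  Nat.sInf_le ⟨α, β, iα, iβ, G, H, hG, hH, rfl⟩

lemma pr_exists (n : ℕ) : ∃ (α β : Type) (_ : Fintype α) (_ : Fintype β)
    (G : α → α → Prop) (H : β → β → Prop),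
    chrNum G = n ∧ chrNum H = n ∧ chrNum (tensorRel G H) = pr n :=
  Nat.sInf_mem (s := {c : ℕ | ∃ (α β : Type) (_ : Fintype α) (_ : Fintype β)
      (G : α → α → Prop) (H : β → β → Prop),
      chrNum G = n ∧ chrNum H = n ∧ chrNum (tensorRel G H) = c})
    ⟨chrNum (tensorRel (fun i j : Fin n => i ≠ j) (fun i j : Fin n => i ≠ j)),
      Fin n, Fin n, inferInstance, inferInstance, _, _, chrNum_ne n, chrNum_ne n, rfl⟩

def lp {α : Type} (G : α → α → Prop) : α → α → Prop := fun u v => G u v ∧ u ≠ v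

lemma symmG_lp {α : Type} (G : α → α → Prop) : symmG (lp G) = symmG G := by
  ext u v
  constructor
  · rintro ⟨hne, h | h⟩
    · exact ⟨hne, Or.inl h.1⟩
    · exact ⟨hne, Or.inr h.1⟩
  · rintro ⟨hne, h | h⟩
    · exact ⟨hne, Or.inl ⟨h, hne⟩⟩
    · exact ⟨hne, Or.inr ⟨h, hne.symm⟩⟩

lemma chrNum_lp {α : Type} (G : α → α → Prop) : chrNum (lp G) = chrNum G := by
  unfold chrNum
  rw [symmG_lp]

lemma lp_loopless {α : Type} (G : α → α → Prop) : Loopless (lp G) := fun _ h => h.2 rfl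

lemma tensor_loopless {α β : Type} {G : α → α → Prop} {H : β → β → Prop}
    (hG : Loopless G) : Loopless (tensorRel G H) := fun p h => hG p.1 h.1

lemma zip_hom (A B : Dig) :
    ∀ t, ∃ z : (It A t).V × (It B t).V → (It ⟨A.V × B.V, tensorRel A.R B.R⟩ t).V,
      DHom (tensorRel (It A t).R (It B t).R) (It ⟨A.V × B.V, tensorRel A.R B.R⟩ t).R z
  | 0 => ⟨id, fun _ _ h => h⟩
  | (t+1) => by
      obtain ⟨z, hz⟩ := zip_hom A B t
      refine ⟨fun p => ⟨(z (p.1.1.1, p.2.1.1), z (p.1.1.2, p.2.1.2)), hz _ _ ⟨p.1.2, p.2.2⟩⟩, ?_⟩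
      rintro p q ⟨h1, h2⟩
      show z (p.1.1.2, p.2.1.2) = z (q.1.1.1, q.2.1.1)
      rw [show p.1.1.2 = q.1.1.1 from h1, show p.2.1.2 = q.2.1.1 from h2]

lemma pr_mono : Monotone pr := by
  refine monotone_nat_of_le_succ (fun n => ?_)
  obtain ⟨α, β, iα, iβ, G, H, hG, hH, hP⟩ := pr_exists (n+1)
  classical
  have hG' : n ≤ chrNum (res G Finset.univ) := by rw [res_univ]; omega
  have hH' : n ≤ chrNum (res H Finset.univ) := by rw [res_univ]; omega
  obtain ⟨tG, htG⟩ := ivt G Finset.univ n hG'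
  obtain ⟨tH, htH⟩ := ivt H Finset.univ n hH'
  have h1 : pr n ≤ chrNum (tensorRel (res G tG) (res H tH)) := pr_le _ _ htG htH
  have h2 : chrNum (tensorRel (res G tG) (res H tH)) ≤ chrNum (tensorRel G H) := by
    refine chrNum_le_of_hom_inj (D := tensorRel (res G tG) (res H tH))
      (E := tensorRel G H) (fun p => (p.1.1, p.2.1)) ?_ ?_
    · intro p q h
      exact Prod.ext (Subtype.ext (congrArg Prod.fst h)) (Subtype.ext (congrArg Prod.snd h))
    · intro p q h
      exact ⟨h.1, h.2⟩
  omega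

theorem dichotomy : (∀ n, pr n ≤ 3) ∨ Filter.Tendsto pr Filter.atTop Filter.atTop := by
  by_cases hu : ∀ b, ∃ a, b ≤ pr a
  · exact Or.inr (Filter.tendsto_atTop_atTop_of_monotone pr_mono hu)
  · left
    push_neg at hu
    obtain ⟨B, hB⟩ := hu
    by_contra hn
    push_neg at hn
    obtain ⟨N, hN⟩ := hn
    have hB4 : 4 ≤ B := by have := hB N; omega
    obtain ⟨t, hdes⟩ := descent B hB4
    set n := max (N + 1) (tower t N + 1) with hn_def
    obtain ⟨α, β, iα, iβ, G, H, hG, hH, hP⟩ := pr_exists n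
    classical
    haveI := iα
    haveI := iβ
    have hGl : chrNum (lp G) = n := by rw [chrNum_lp]; exact hG
    have hHl : chrNum (lp H) = n := by rw [chrNum_lp]; exact hH
    have hincl : chrNum (tensorRel (lp G) (lp H)) ≤ chrNum (tensorRel G H) := by
      refine chrNum_le_of_hom_inj (D := tensorRel (lp G) (lp H)) (E := tensorRel G H)
        id (fun a b h => h) ?_
      intro p q h
      exact ⟨h.1.1, h.2.1⟩
    have hprodB : chrNum (tensorRel (lp G) (lp H)) ≤ B := by
      have hBn := hB n
      omega
    set XG : Dig := ⟨α, lp G⟩ with hXG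
    set XH : Dig := ⟨β, lp H⟩ with hXH
    set XP : Dig := ⟨α × β, tensorRel (lp G) (lp H)⟩ with hXP
    have hFinG : Finite XG.V := inferInstanceAs (Finite α)
    have hFinH : Finite XH.V := inferInstanceAs (Finite β)
    have hFinP : Finite XP.V := inferInstanceAs (Finite (α × β))
    have hPloop : Loopless XP.R := tensor_loopless (lp_loopless G)
    have hdt : chrNum (It XP t).R ≤ 3 := hdes XP hFinP hPloop hprodB
    have haN : N < chrNum (It XG t).R := by
      by_contra hle
      push_neg at hle
      have h1 : chrNum XG.R ≤ tower t N := chrNum_le_tower XG hFinG t N hle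
      have h2 : chrNum XG.R = n := hGl
      have h3 : tower t N + 1 ≤ n := le_max_right _ _
      omega
    have hbN : N < chrNum (It XH t).R := by
      by_contra hle
      push_neg at hle
      have h1 : chrNum XH.R ≤ tower t N := chrNum_le_tower XH hFinH t N hle
      have h2 : chrNum XH.R = n := hHl
      have h3 : tower t N + 1 ≤ n := le_max_right _ _
      omega
    set k := min (chrNum (It XG t).R) (chrNum (It XH t).R) with hk
    haveI : Finite (It XG t).V := It_finite XG hFinG t
    haveI : Finite (It XH t).V := It_finite XH hFinH t
    haveI : Finite (It XP t).V := It_finite XP hFinP t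
    letI : Fintype (It XG t).V := Fintype.ofFinite _
    letI : Fintype (It XH t).V := Fintype.ofFinite _
    have hkG : k ≤ chrNum (res (It XG t).R Finset.univ) := by
      rw [res_univ]; exact min_le_left _ _
    have hkH : k ≤ chrNum (res (It XH t).R Finset.univ) := by
      rw [res_univ]; exact min_le_right _ _
    obtain ⟨tG, htG⟩ := ivt (It XG t).R Finset.univ k hkG
    obtain ⟨tH, htH⟩ := ivt (It XH t).R Finset.univ k hkH
    letI : Fintype {a // a ∈ tG} := FinsetCoe.fintype tG
    letI : Fintype {a // a ∈ tH} := FinsetCoe.fintype tH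
    have h1 : pr k ≤ chrNum (tensorRel (res (It XG t).R tG) (res (It XH t).R tH)) :=
      pr_le _ _ htG htH
    have h2 : chrNum (tensorRel (res (It XG t).R tG) (res (It XH t).R tH)) ≤
        chrNum (tensorRel (It XG t).R (It XH t).R) := by
      refine chrNum_le_of_hom_inj (D := tensorRel (res (It XG t).R tG) (res (It XH t).R tH))
        (E := tensorRel (It XG t).R (It XH t).R) (fun p => (p.1.1, p.2.1)) ?_ ?_
      · intro p q h
        exact Prod.ext (Subtype.ext (congrArg Prod.fst h)) (Subtype.ext (congrArg Prod.snd h))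
      · intro p q h
        exact ⟨h.1, h.2⟩
    obtain ⟨z, hz⟩ := zip_hom XG XH t
    have h3 : chrNum (tensorRel (It XG t).R (It XH t).R) ≤ chrNum (It XP t).R :=
      chrNum_le_of_hom_loopless z (It_loopless XP hPloop t) hz
    have hk4 : 4 ≤ pr k := by
      have hNk : N ≤ k := le_min (Nat.le_of_lt haN) (Nat.le_of_lt hbN)
      have := pr_mono hNk
      omega
    omega

end PRaux

/-- Either `pr n ≤ 3` for all `n`, or `pr n → ∞` as `n → ∞`. -/
theorem poljak_rodl_dichotomy :
    (∀ n, pr n ≤ 3) ∨ Filter.Tendsto pr Filter.atTop Filter.atTop :=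
  PRaux.dichotomy
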